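/- Let φ₁,…,φₙ be positive definite unital functionals on ℝ⟨x₁,…,xₙ⟩ (i.e., φᵢ(P*P) ≥ 0 for all P). Define ψ on ℝ⟨x₁,…,xₙ⟩ by ψ(1) = ψ(xᵢ) = 0, ψ(xᵢxⱼ) = δᵢⱼ, and ψ(xᵢ P(x) xⱼ) = δᵢⱼ φᵢ(P(x)) for any polynomial P (extended linearly). Then ψ is conditionally positive definite: ψ(Q*Q) ≥ 0 for every polynomial Q with no constant term whose terms all have degree ≥ 1, where in particular ψ(A*A) = Σᵢ φᵢ(Pᵢ* Pᵢ) ≥ 0 for A = Σᵢ Pᵢ(x) xᵢ. -/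
import Mathlib


/-- The monomial `x_{u(1)} ⋯ x_{u(k)}` in the free algebra `ℝ⟨x₁,…,xₙ⟩`. -/
noncomputable def mono {n : ℕ} (u : List (Fin n)) : FreeAlgebra ℝ (Fin n) :=
  (u.map (FreeAlgebra.ι ℝ)).prod

/-- The span of monomials of length (degree) `< k`: "lower-order terms". -/
noncomputable def lowerOrder (n k : ℕ) : Submodule ℝ (FreeAlgebra ℝ (Fin n)) :=
  Submodule.span ℝ {m | ∃ v : List (Fin n), v.length < k ∧ m = mono v}

/-- The monomial-reversing involution `*` on `ℝ⟨x₁,…,xₙ⟩`. -/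
noncomputable def ncStar {n : ℕ} (P : FreeAlgebra ℝ (Fin n)) : FreeAlgebra ℝ (Fin n) :=
  MulOpposite.unop
    (FreeAlgebra.lift ℝ (fun i => MulOpposite.op (FreeAlgebra.ι ℝ i)) P)

/-- A monic polynomial family: `P_∅ = 1` and `P_u = x_u + lower-order terms`. -/
def IsMonicFamily {n : ℕ} (P : List (Fin n) → FreeAlgebra ℝ (Fin n)) : Prop :=
  P [] = 1 ∧ ∀ u : List (Fin n), P u - mono u ∈ lowerOrder n u.length

lemma ncStar_mul {n : ℕ} (a b : FreeAlgebra ℝ (Fin n)) :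
    ncStar (a * b) = ncStar b * ncStar a := by
  simp [ncStar]

lemma ncStar_ι {n : ℕ} (i : Fin n) : ncStar (FreeAlgebra.ι ℝ i) = FreeAlgebra.ι ℝ i := by
  simp [ncStar]

lemma ncStar_sum {n : ℕ} {α : Type*} (s : Finset α) (f : α → FreeAlgebra ℝ (Fin n)) :
    ncStar (∑ i ∈ s, f i) = ∑ i ∈ s, ncStar (f i) := by
  simp [ncStar]

lemma mono_concat {n : ℕ} (v : List (Fin n)) (i : Fin n) :
    mono (v ++ [i]) = mono v * FreeAlgebra.ι ℝ i := by
  simp [mono]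

/-- if `φ₁,…,φₙ` are positive definite unital functionals and `ψ` satisfies
`ψ(1) = ψ(xᵢ) = 0`, `ψ(xᵢxⱼ) = δᵢⱼ`, `ψ(xᵢ P xⱼ) = δᵢⱼ φᵢ(P)`, then `ψ` is conditionally
positive definite: `ψ(Q*Q) ≥ 0` for every `Q` in the span of monomials of degree `≥ 1`;
in particular `ψ(A*A) = Σᵢ φᵢ(Pᵢ* Pᵢ) ≥ 0` for `A = Σᵢ Pᵢ(x)xᵢ`. -/
theorem exp_of_functionals_conditionally_positive (n : ℕ)
    (φ : Fin n → (FreeAlgebra ℝ (Fin n) →ₗ[ℝ] ℝ))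
    (hφ1 : ∀ i : Fin n, φ i 1 = 1)
    (hφpos : ∀ (i : Fin n) (A : FreeAlgebra ℝ (Fin n)), 0 ≤ φ i (ncStar A * A))
    (ψ : FreeAlgebra ℝ (Fin n) →ₗ[ℝ] ℝ)
    (hψ1 : ψ 1 = 0)
    (hψx : ∀ i : Fin n, ψ (FreeAlgebra.ι ℝ i) = 0)
    (hψ2 : ∀ i j : Fin n,
      ψ (FreeAlgebra.ι ℝ i * FreeAlgebra.ι ℝ j) = if i = j then 1 else 0)
    (hψmid : ∀ (i j : Fin n) (Q : FreeAlgebra ℝ (Fin n)),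
      ψ (FreeAlgebra.ι ℝ i * Q * FreeAlgebra.ι ℝ j) = if i = j then φ i Q else 0) :
    (∀ Q ∈ Submodule.span ℝ {m : FreeAlgebra ℝ (Fin n) |
        ∃ v : List (Fin n), v ≠ [] ∧ m = mono v},
      0 ≤ ψ (ncStar Q * Q))
    ∧ (∀ P : Fin n → FreeAlgebra ℝ (Fin n),
        ψ (ncStar (∑ i, P i * FreeAlgebra.ι ℝ i) * (∑ i, P i * FreeAlgebra.ι ℝ i))
          = ∑ i, φ i (ncStar (P i) * P i)) := by
  have part2 : ∀ P : Fin n → FreeAlgebra ℝ (Fin n),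
      ψ (ncStar (∑ i, P i * FreeAlgebra.ι ℝ i) * (∑ i, P i * FreeAlgebra.ι ℝ i))
        = ∑ i, φ i (ncStar (P i) * P i) := by
    intro P
    rw [ncStar_sum]
    have h : ∀ i : Fin n,
        ncStar (P i * FreeAlgebra.ι ℝ i) = FreeAlgebra.ι ℝ i * ncStar (P i) :=
      fun i => by rw [ncStar_mul, ncStar_ι]
    simp_rw [h, Finset.sum_mul, Finset.mul_sum, map_sum]
    have key : ∀ i j : Fin n,
        ψ (FreeAlgebra.ι ℝ i * ncStar (P i) * (P j * FreeAlgebra.ι ℝ j))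
          = if i = j then φ i (ncStar (P i) * P j) else 0 := by
      intro i j
      rw [show FreeAlgebra.ι ℝ i * ncStar (P i) * (P j * FreeAlgebra.ι ℝ j)
          = FreeAlgebra.ι ℝ i * (ncStar (P i) * P j) * FreeAlgebra.ι ℝ j by noncomm_ring,
        hψmid]
    simp_rw [key]
    simp
  refine ⟨?_, part2⟩
  intro Q hQ
  have hrep : ∃ P : Fin n → FreeAlgebra ℝ (Fin n),
      Q = ∑ i, P i * FreeAlgebra.ι ℝ i := by
    induction hQ using Submodule.span_induction with
    | mem m hm =>
        obtain ⟨v, hv, rfl⟩ := hm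
        refine ⟨fun j => if j = v.getLast hv then mono v.dropLast else 0, ?_⟩
        have : v.dropLast ++ [v.getLast hv] = v := List.dropLast_append_getLast hv
        conv_lhs => rw [← this]
        rw [mono_concat]
        rw [Finset.sum_eq_single (v.getLast hv)]
        · simp
        · intro b _ hb; simp [hb]
        · simp
    | zero => exact ⟨0, by simp⟩
    | add a b _ _ ha hb =>
        obtain ⟨Pa, rfl⟩ := ha; obtain ⟨Pb, rfl⟩ := hb
        exact ⟨Pa + Pb, by simp [add_mul, Finset.sum_add_distrib]⟩
    | smul c a _ ha =>
        obtain ⟨Pa, rfl⟩ := ha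
        exact ⟨c • Pa, by simp [Finset.smul_sum, smul_mul_assoc]⟩
  obtain ⟨P, rfl⟩ := hrep
  rw [part2]
  exact Finset.sum_nonneg fun i _ => hφpos i (P i)
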